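/- Let R be a left noetherian ring, (T,F) a torsion pair in the category of all left R-modules such that F is closed under direct limits and T is generated by finitely presented modules (i.e. T is the closure of t = T ∩ mod-R under direct limits), and let (t,f) be its restriction to finitely presented modules. Then Alpha(T) ∩ mod-R = Alpha~(t), where Alpha(T) = { X | every f : T → X with T in T has ker(f) in T } computed in R-Mod, and Alpha~(t) is the analogous class computed inside the category of finitely presented modules. -/

import Mathlib

open CategoryTheory CategoryTheory.Limits

universe v u

variable {A : Type u} [Category.{v} A] [Abelian A]

/-- `(𝒯, ℱ)` is a torsion pair: no nonzero morphisms from `𝒯` to `ℱ`, and every object is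
an extension of an object of `ℱ` by an object of `𝒯`. -/
def IsTorsionPair (𝒯 ℱ : Set A) : Prop :=
  (∀ ⦃X Y : A⦄, X ∈ 𝒯 → Y ∈ ℱ → ∀ f : X ⟶ Y, f = 0) ∧
  (∀ M : A, ∃ (X Y : A) (_ : X ∈ 𝒯) (_ : Y ∈ ℱ) (i : X ⟶ M) (p : M ⟶ Y)
      (w : i ≫ p = 0), (ShortComplex.mk i p w).ShortExact)

/-- `Alpha 𝒯` consists of the objects `X` such that every morphism from an object of `𝒯`
to `X` has kernel in `𝒯`. -/
def Alpha (𝒯 : Set A) : Set A :=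
  {X | ∀ ⦃T : A⦄, T ∈ 𝒯 → ∀ f : T ⟶ X, kernel f ∈ 𝒯}

/-- `alphaSet 𝒯 = 𝒯 ∩ Alpha 𝒯`. -/
def alphaSet (𝒯 : Set A) : Set A := 𝒯 ∩ Alpha 𝒯

variable (R : Type u) [Ring R]

/-- A witness that `X` is a direct limit (filtered colimit) of objects of `S`. -/
structure DirLimWitness (S : Set (ModuleCat.{u} R)) (X : ModuleCat.{u} R) where
  J : Type u
  [instJ : SmallCategory J]
  [instF : IsFiltered J]
  D : J ⥤ ModuleCat.{u} R
  mem : ∀ j, D.obj j ∈ S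
  c : Limits.Cocone D
  isColimit : Limits.IsColimit c
  pt_eq : c.pt = X

/-- The direct limit closure of a class of modules. -/
def limClosure (S : Set (ModuleCat.{u} R)) : Set (ModuleCat.{u} R) :=
  {X | Nonempty (DirLimWitness R S X)}

/-- The finitely presented modules. -/
def fpModules : Set (ModuleCat.{u} R) := {X | Module.FinitePresentation R X}

/-- Let `R` be left noetherian and `(𝒯, ℱ)` a torsion pair in `R-Mod` such that `ℱ` is
closed under direct limits and `𝒯` is the direct limit closure of `t = 𝒯 ∩ mod-R`.
Then `Alpha 𝒯 ∩ mod-R` coincides with the class `Alpha~(t)` computed inside the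
category of finitely presented modules. -/
lemma fp_of_iso {M N : ModuleCat.{u} R} (e : M ≅ N) (h : Module.FinitePresentation R M) :
    Module.FinitePresentation R N := by
  haveI := h
  exact Module.finitePresentation_of_surjective e.toLinearEquiv.toLinearMap
    e.toLinearEquiv.surjective (by rw [LinearEquiv.ker]; exact Submodule.fg_bot)

lemma limClosure_iso {S : Set (ModuleCat.{u} R)} {M N : ModuleCat.{u} R} (e : M ≅ N)
    (h : M ∈ limClosure R S) : N ∈ limClosure R S := by
  obtain ⟨⟨J, D, mem, c, hc, hpt⟩⟩ := h
  subst hpt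
  exact ⟨⟨J, D, mem, ⟨N, c.ι ≫ (Functor.const J).map e.hom⟩,
    IsColimit.ofIsoColimit hc (Cocones.ext e fun j => rfl), rfl⟩⟩

lemma kernel_mem_limClosure {S : Set (ModuleCat.{u} R)} {T X : ModuleCat.{u} R}
    (hT : T ∈ limClosure R S) (f : T ⟶ X)
    (hker : ∀ ⦃j⦄, ∀ hj : j ∈ S, ∀ g : j ⟶ X, ModuleCat.of R (LinearMap.ker g.hom) ∈ S) :
    (kernel f : ModuleCat.{u} R) ∈ limClosure R S := by
  obtain ⟨⟨J, D, mem, c, hc, hpt⟩⟩ := hT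
  subst hpt
  let α : ∀ j, D.obj j ⟶ X := fun j => c.ι.app j ≫ f
  have hαapp : ∀ (j : J) (x : D.obj j), α j x = f (c.ι.app j x) := fun j x => rfl
  have key : ∀ {i j : J} (φ : i ⟶ j), ∀ x ∈ LinearMap.ker (α i).hom,
      (D.map φ) x ∈ LinearMap.ker (α j).hom := by
    intro i j φ x hx
    simp only [LinearMap.mem_ker] at hx ⊢
    have h1 : α j ((D.map φ) x) = α i x := by
      show (D.map φ ≫ c.ι.app j ≫ f) x = (c.ι.app i ≫ f) x
      rw [← Category.assoc, c.w φ]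
    rw [h1, hx]
  let K : J ⥤ ModuleCat.{u} R :=
    { obj := fun j => ModuleCat.of R (LinearMap.ker (α j).hom)
      map := fun {i j} φ => ModuleCat.ofHom ((D.map φ).hom.restrict (key φ))
      map_id := fun j => by
        ext x
        show (D.map (𝟙 j)) x.1 = x.1
        rw [D.map_id]; rfl
      map_comp := fun {i j k} φ ψ => by
        ext x
        show (D.map (φ ≫ ψ)) x.1 = (D.map ψ) ((D.map φ) x.1)
        rw [D.map_comp]; rfl }
  have keyι : ∀ (j : J), ∀ x ∈ LinearMap.ker (α j).hom, (c.ι.app j) x ∈ LinearMap.ker f.hom := by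
    intro j x hx
    simpa only [LinearMap.mem_ker, hαapp] using hx
  let t : Cocone K :=
    { pt := ModuleCat.of R (LinearMap.ker f.hom)
      ι :=
        { app := fun j => ModuleCat.ofHom ((c.ι.app j).hom.restrict (keyι j))
          naturality := fun i j φ => by
            ext x
            refine Subtype.ext ?_
            show (c.ι.app j) ((D.map φ) x.1) = (c.ι.app i) x.1
            exact congr_arg (fun g => ModuleCat.Hom.hom g x.1) (c.w φ) } }
  have cforget := isColimitOfPreserves (forget (ModuleCat.{u} R)) hc
  have ht : IsColimit ((forget (ModuleCat.{u} R)).mapCocone t) := by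
    apply Types.FilteredColimit.isColimitOf
    · intro x
      obtain ⟨j, y, hy⟩ := Types.jointly_surjective _ cforget (x.1 : ((forget (ModuleCat R)).mapCocone c).pt)
      have hyk : y ∈ LinearMap.ker (α j).hom := by
        show f ((c.ι.app j) y) = 0
        rw [show (c.ι.app j) y = x.1 from hy]
        exact x.2
      refine ⟨j, ⟨y, hyk⟩, ?_⟩
      exact Subtype.ext (hy.symm)
    · intro i j xi xj h
      have h1 : ((forget (ModuleCat.{u} R)).mapCocone c).ι.app i xi.1
          = ((forget (ModuleCat.{u} R)).mapCocone c).ι.app j xj.1 := congrArg Subtype.val h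
      obtain ⟨k, φ, ψ, hk⟩ := (Types.FilteredColimit.isColimit_eq_iff _ cforget).mp h1
      exact ⟨k, φ, ψ, Subtype.ext hk⟩
  have htc : IsColimit t := isColimitOfReflects (forget (ModuleCat.{u} R)) ht
  let e : ModuleCat.of R (LinearMap.ker f.hom) ≅ (kernel f : ModuleCat.{u} R) :=
    (ModuleCat.kernelIsoKer f).symm
  exact ⟨⟨J, K, (fun j => hker (mem j) (α j)), ⟨kernel f, t.ι ≫ (Functor.const J).map e.hom⟩,
    IsColimit.ofIsoColimit htc (Cocones.ext e fun j => rfl), rfl⟩⟩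

lemma fg_kernel_fp {T X : ModuleCat.{u} R} [IsNoetherianRing R]
    (hT : Module.FinitePresentation R T) (f : T ⟶ X) :
    Module.FinitePresentation R (kernel f : ModuleCat.{u} R) := by
  haveI := hT
  haveI : Module.Finite R T := inferInstance
  haveI : IsNoetherian R T := isNoetherian_of_isNoetherianRing_of_finite R T
  haveI : Module.Finite R (LinearMap.ker f.hom) :=
    Module.Finite.iff_fg.mpr (IsNoetherian.noetherian _)
  exact fp_of_iso R (ModuleCat.kernelIsoKer f).symm
    (Module.finitePresentation_of_finite R (LinearMap.ker f.hom))

theorem Alpha_inter_fp_eq_Alpha_small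
    [IsNoetherianRing R] (𝒯 ℱ : Set (ModuleCat.{u} R)) (htp : IsTorsionPair 𝒯 ℱ)
    (hF : limClosure R ℱ ⊆ ℱ) (hT : 𝒯 = limClosure R (𝒯 ∩ fpModules R)) :
    Alpha 𝒯 ∩ fpModules R =
      {X | X ∈ fpModules R ∧ ∀ ⦃T : ModuleCat.{u} R⦄, T ∈ 𝒯 ∩ fpModules R →
        ∀ f : T ⟶ X, kernel f ∈ 𝒯 ∩ fpModules R} := by
  ext X
  simp only [Set.mem_inter_iff, Set.mem_setOf_eq, Alpha, fpModules]
  constructor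
  · rintro ⟨hX, hXfp⟩
    refine ⟨hXfp, ?_⟩
    rintro T ⟨hT𝒯, hTfp⟩ f
    exact ⟨hX hT𝒯 f, fg_kernel_fp R hTfp f⟩
  · rintro ⟨hXfp, hsmall⟩
    refine ⟨?_, hXfp⟩
    intro T hTmem f
    rw [hT] at hTmem ⊢
    apply kernel_mem_limClosure R hTmem f
    intro M hM g
    have h1 := hsmall hM g
    refine ⟨?_, fp_of_iso R (ModuleCat.kernelIsoKer g) h1.2⟩
    rw [hT]
    exact limClosure_iso R (ModuleCat.kernelIsoKer g) (hT ▸ h1.1)
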